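/- With G and φ as in the previous statement, let z = g^{-6}·[y,x] where [y,x] = y·x·y^{-1}·x^{-1}. Then φ(z) = z·w. -/

import Mathlib

namespace EyralOkaG

open FreeGroup

/-- Generators of `G = ((F₂ × ℤ/2) ⋊ V) ⋊ ℤ`: `g = 0`, `x = 1`, `y = 2`, `w = 3`,
`a = 4`, `b = 5`. -/
def Gg : FreeGroup (Fin 6) := of 0
def X : FreeGroup (Fin 6) := of 1
def Y : FreeGroup (Fin 6) := of 2
def W : FreeGroup (Fin 6) := of 3
def A : FreeGroup (Fin 6) := of 4
def B : FreeGroup (Fin 6) := of 5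

/-- Defining relations of `G = G' ⋊ ℤ`, where `G' = (F₂ × ℤ/2) ⋊ V` is generated by
`x, y, w, a, b` as before and the generator `g` of `ℤ` acts by `g x g⁻¹ = y⁻¹`,
`g y g⁻¹ = y·x·b`, `g w g⁻¹ = w`, `g a g⁻¹ = b`, `g b g⁻¹ = a·b`. -/
def GRels : Set (FreeGroup (Fin 6)) :=
  { W * W, X * W * X⁻¹ * W⁻¹, Y * W * Y⁻¹ * W⁻¹,
    A * A, B * B, A * B * A⁻¹ * B⁻¹,
    A * X * A⁻¹ * X⁻¹, A * Y * A⁻¹ * (Y * W)⁻¹, A * W * A⁻¹ * W⁻¹,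
    B * X * B⁻¹ * (X * W)⁻¹, B * Y * B⁻¹ * Y⁻¹, B * W * B⁻¹ * W⁻¹,
    Gg * X * Gg⁻¹ * (Y⁻¹)⁻¹, Gg * Y * Gg⁻¹ * (Y * X * B)⁻¹, Gg * W * Gg⁻¹ * W⁻¹,
    Gg * A * Gg⁻¹ * B⁻¹, Gg * B * Gg⁻¹ * (A * B)⁻¹ }

/-- The fundamental group `G` of the affine Eyral-Oka curve complement, via its explicit
semidirect product presentation. -/
def G : Type := PresentedGroup GRels

instance : Group G := by unfold G; infer_instance

def g : G := PresentedGroup.of 0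
def x : G := PresentedGroup.of 1
def y : G := PresentedGroup.of 2
def w : G := PresentedGroup.of 3
def a : G := PresentedGroup.of 4
def b : G := PresentedGroup.of 5

/-- The central element `z = g⁻⁶·[y,x]`. -/
def z : G := g ^ (-6 : ℤ) * (y * x * y⁻¹ * x⁻¹)

lemma rel_eq_one {r : FreeGroup (Fin 6)} (h : r ∈ GRels) :
    (PresentedGroup.mk GRels r : G) = 1 := by
  have : r ∈ Subgroup.normalClosure GRels := Subgroup.subset_normalClosure h
  exact (QuotientGroup.eq_one_iff r).2 this

lemma conj_eq {u v : FreeGroup (Fin 6)} (h : u * v⁻¹ ∈ GRels) :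
    (PresentedGroup.mk GRels u : G) = PresentedGroup.mk GRels v := by
  have := rel_eq_one h
  rw [_root_.map_mul, _root_.map_inv] at this
  exact mul_inv_eq_one.mp this

lemma hww : w * w = (1 : G) := rel_eq_one (by left; rfl)

lemma hxw : x * w = w * x := by
  have := conj_eq (u := X * W) (v := W * X) (by
    right; left
    show X * W * X⁻¹ * W⁻¹ = X * W * (W * X)⁻¹
    group)
  simp only [_root_.map_mul] at this
  exact this

lemma hyw : y * w = w * y := by
  have := conj_eq (u := Y * W) (v := W * Y) (by
    right; right; left
    show Y * W * Y⁻¹ * W⁻¹ = Y * W * (W * Y)⁻¹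
    group)
  simp only [_root_.map_mul] at this
  exact this

lemma haa : a * a = (1 : G) := rel_eq_one (by right; right; right; left; rfl)

lemma hax : a * x = x * a := by
  have := conj_eq (u := A * X) (v := X * A) (by
    right; right; right; right; right; right; left
    show A * X * A⁻¹ * X⁻¹ = A * X * (X * A)⁻¹
    group)
  simp only [_root_.map_mul] at this
  exact this

lemma hay : a * y = y * w * a := by
  have := conj_eq (u := A * Y) (v := Y * W * A) (by
    right; right; right; right; right; right; right; left
    show A * Y * A⁻¹ * (Y * W)⁻¹ = A * Y * (Y * W * A)⁻¹
    group)
  simp only [_root_.map_mul] at this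
  exact this

lemma haw : a * w = w * a := by
  have := conj_eq (u := A * W) (v := W * A) (by
    right; right; right; right; right; right; right; right; left
    show A * W * A⁻¹ * W⁻¹ = A * W * (W * A)⁻¹
    group)
  simp only [_root_.map_mul] at this
  exact this

lemma winv : w⁻¹ = w := inv_eq_of_mul_eq_one_right hww
lemma ainv : a⁻¹ = a := inv_eq_of_mul_eq_one_right haa

lemma comm3 {p q : G} (h : p * q = q * p) (t : G) : p * (q * t) = q * (p * t) := by
  rw [← mul_assoc, h, mul_assoc]
lemma cancel3 {p : G} (h : p * p = 1) (t : G) : p * (p * t) = t := by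
  rw [← mul_assoc, h, one_mul]

lemma hxiw : x⁻¹ * w = w * x⁻¹ := (show Commute x w from hxw).inv_left
lemma hyiw : y⁻¹ * w = w * y⁻¹ := (show Commute y w from hyw).inv_left
lemma haxi : a * x⁻¹ = x⁻¹ * a := (show Commute a x from hax).inv_right

lemma hay' : a * y = y * (w * a) := by rw [hay, mul_assoc]
lemma hay3 (t : G) : a * (y * t) = y * (w * (a * t)) := by
  rw [← mul_assoc, hay, mul_assoc, mul_assoc]

lemma hayi : a * y⁻¹ = w * (y⁻¹ * a) := by
  have h1 : w * (y⁻¹ * (a * y)) = a := by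
    rw [hay, mul_assoc, inv_mul_cancel_left]
    exact cancel3 hww a
  calc a * y⁻¹ = w * (y⁻¹ * (a * y)) * y⁻¹ := by rw [h1]
    _ = w * (y⁻¹ * a) := by group

lemma hayi3 (t : G) : a * (y⁻¹ * t) = w * (y⁻¹ * (a * t)) := by
  rw [← mul_assoc, hayi, mul_assoc, mul_assoc]

lemma key : (y * x * w) * (y⁻¹ * a) * (y * x * w)⁻¹ * (y⁻¹ * a)⁻¹
    = y * x * y⁻¹ * x⁻¹ * w := by
  simp only [mul_inv_rev, winv, ainv, mul_assoc, inv_inv,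
    hww, cancel3 hww, haa, cancel3 haa,
    hxw, comm3 hxw, hxiw, comm3 hxiw, hyw, comm3 hyw, hyiw, comm3 hyiw,
    haw, comm3 haw, hax, comm3 hax, haxi, comm3 haxi,
    hay', hay3, hayi, hayi3,
    inv_mul_cancel_left, mul_inv_cancel_left, inv_mul_cancel, mul_inv_cancel,
    one_mul, mul_one]

/-- Any automorphism `φ` of `G` with `φ(g) = g`, `φ(x) = y⁻¹a`, `φ(y) = yxw`, `φ(a) = b`,
`φ(b) = ab`, `φ(w) = w` satisfies `φ(z) = z·w` for `z = g⁻⁶·[y,x]`. -/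
theorem automorphism_maps_z_to_zw (φ : G ≃* G)
    (hg : φ g = g) (hx : φ x = y⁻¹ * a) (hy : φ y = y * x * w)
    (ha : φ a = b) (hb : φ b = a * b) (hw : φ w = w) :
    φ z = z * w := by
  have hc : φ (y * x * y⁻¹ * x⁻¹) = y * x * y⁻¹ * x⁻¹ * w := by
    rw [_root_.map_mul, _root_.map_mul, _root_.map_mul, _root_.map_inv,
      _root_.map_inv, hx, hy]
    exact key
  unfold z
  rw [_root_.map_mul, _root_.map_zpow, hg, hc]; group

end EyralOkaG
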